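/- Let V = ℂ^n, Σ ≤ GL(V) a finite group, G ≤ Σ with ℓ = [Σ:G], and 𝒮 = Σ/G the set of left cosets with its Σ-action. Then the total number of reflections contained in G equals Σ_{P∈𝒫} ( |C_P| · o(P) / ℓ − 1 ), where 𝒫 is the set of all reflecting hyperplanes of Σ, C_P is the subgroup of elements of Σ fixing P pointwise, and o(P) is the number of orbits of C_P on 𝒮. -/

import Mathlib

open MvPolynomial

set_option maxHeartbeats 1000000

/-- The fixed-point subspace of a linear automorphism `g` of `ℂ^n`. -/
noncomputable def fixedSubspace {n : ℕ} (g : (Fin n → ℂ) ≃ₗ[ℂ] (Fin n → ℂ)) :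
    Submodule ℂ (Fin n → ℂ) where
  carrier := {v | g v = v}
  add_mem' := by
    intro a b ha hb
    simp only [Set.mem_setOf_eq] at *
    rw [map_add, ha, hb]
  zero_mem' := by simp
  smul_mem' := by
    intro c v hv
    simp only [Set.mem_setOf_eq] at *
    rw [map_smul, hv]

/-- `g` is a reflection: a nonidentity linear automorphism whose fixed-point subspace is a
hyperplane of `ℂ^n`. -/
def IsReflection {n : ℕ} (g : (Fin n → ℂ) ≃ₗ[ℂ] (Fin n → ℂ)) : Prop :=
  g ≠ 1 ∧ Module.finrank ℂ (fixedSubspace g) = n - 1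

/-- The set of reflecting hyperplanes of a group `Sg` of linear automorphisms of `ℂ^n`. -/
def reflHyperplanes {n : ℕ} (Sg : Subgroup ((Fin n → ℂ) ≃ₗ[ℂ] (Fin n → ℂ))) :
    Set (Submodule ℂ (Fin n → ℂ)) :=
  {P | ∃ g ∈ Sg, IsReflection g ∧ fixedSubspace g = P}

/-- The subgroup `C_P` of elements of `Sg` fixing `P` pointwise. -/
noncomputable def pointwiseStab {n : ℕ} (Sg : Subgroup ((Fin n → ℂ) ≃ₗ[ℂ] (Fin n → ℂ)))
    (P : Submodule ℂ (Fin n → ℂ)) : Subgroup ↥Sg where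
  carrier := {g | ∀ v ∈ P, (g : (Fin n → ℂ) ≃ₗ[ℂ] (Fin n → ℂ)) v = v}
  one_mem' := by
    intro v hv
    rfl
  mul_mem' := by
    intro a b ha hb v hv
    have : (↑(a * b) : (Fin n → ℂ) ≃ₗ[ℂ] (Fin n → ℂ)) v
        = (a : (Fin n → ℂ) ≃ₗ[ℂ] (Fin n → ℂ)) ((b : (Fin n → ℂ) ≃ₗ[ℂ] (Fin n → ℂ)) v) := rfl
    rw [this, hb v hv, ha v hv]
  inv_mem' := by
    intro a ha v hv
    have h1 : (a : (Fin n → ℂ) ≃ₗ[ℂ] (Fin n → ℂ)) v = v := ha v hv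
    have : (↑(a⁻¹) : (Fin n → ℂ) ≃ₗ[ℂ] (Fin n → ℂ)) v
        = ((a : (Fin n → ℂ) ≃ₗ[ℂ] (Fin n → ℂ)).symm) v := rfl
    rw [this]
    conv_lhs => rw [← h1]
    exact (a : (Fin n → ℂ) ≃ₗ[ℂ] (Fin n → ℂ)).symm_apply_apply v

/-- The number of orbits of `C_P` acting on the set `𝒮 = Sg/G` of left cosets of `G`. -/
noncomputable def numOrbits {n : ℕ} (Sg G : Subgroup ((Fin n → ℂ) ≃ₗ[ℂ] (Fin n → ℂ)))
    (P : Submodule ℂ (Fin n → ℂ)) : ℕ :=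
  Nat.card (MulAction.orbitRel.Quotient ↥(pointwiseStab Sg P) (↥Sg ⧸ G.subgroupOf Sg))

/-- `ℬ` is a `Sg`-orbit of reflecting hyperplanes of `Sg`. -/
def IsHyperplaneOrbit {n : ℕ} (Sg : Subgroup ((Fin n → ℂ) ≃ₗ[ℂ] (Fin n → ℂ)))
    (ℬ : Set (Submodule ℂ (Fin n → ℂ))) : Prop :=
  ℬ.Nonempty ∧ ℬ ⊆ reflHyperplanes Sg ∧
  (∀ P ∈ ℬ, ∀ σ ∈ Sg, P.map (σ : (Fin n → ℂ) ≃ₗ[ℂ] (Fin n → ℂ)).toLinearMap ∈ ℬ) ∧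
  ∀ P ∈ ℬ, ∀ Q ∈ ℬ, ∃ σ ∈ Sg, P.map (σ : (Fin n → ℂ) ≃ₗ[ℂ] (Fin n → ℂ)).toLinearMap = Q

section AuxStmt8

variable {n : ℕ}

local notation "E" => ((Fin n → ℂ) ≃ₗ[ℂ] (Fin n → ℂ))

lemma mem_fixedSubspace {g : E} {v : Fin n → ℂ} : v ∈ fixedSubspace g ↔ g v = v := Iff.rfl

lemma fixedSubspace_eq_top_iff {g : E} : fixedSubspace g = ⊤ ↔ g = 1 := by
  rw [Submodule.eq_top_iff']
  constructor
  · intro h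
    exact LinearEquiv.ext fun v => h v
  · rintro rfl v
    rfl

lemma finrank_V : Module.finrank ℂ (Fin n → ℂ) = n := by
  simp [Module.finrank_pi]

lemma fixedSubspace_conj (h g : E) :
    fixedSubspace (h * g * h⁻¹) = (fixedSubspace g).map (h : E).toLinearMap := by
  ext v
  simp only [mem_fixedSubspace, Submodule.mem_map]
  constructor
  · intro hv
    have hv' : h (g (h⁻¹ v)) = v := hv
    refine ⟨h⁻¹ v, ?_, h.apply_symm_apply v⟩
    show g (h⁻¹ v) = h⁻¹ v
    calc g (h⁻¹ v) = h⁻¹ (h (g (h⁻¹ v))) := (h.symm_apply_apply _).symm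
    _ = h⁻¹ v := by rw [hv']
  · rintro ⟨w, hw, rfl⟩
    show h (g (h⁻¹ (h w))) = h w
    have h1 : h⁻¹ (h w) = w := h.symm_apply_apply w
    rw [h1, hw]

lemma isReflection_conj {h g : E} (hr : IsReflection g) : IsReflection (h * g * h⁻¹) := by
  refine ⟨by simpa [conj_eq_one_iff] using hr.1, ?_⟩
  rw [fixedSubspace_conj, LinearEquiv.finrank_map_eq]
  exact hr.2

lemma isReflection_conj_iff (h g : E) : IsReflection (h * g * h⁻¹) ↔ IsReflection g := by
  constructor
  · intro hr
    have := isReflection_conj (h := h⁻¹) hr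
    simpa [mul_assoc] using this
  · exact isReflection_conj

lemma mem_pointwiseStab {Sg : Subgroup E} {P : Submodule ℂ (Fin n → ℂ)} {γ : ↥Sg} :
    γ ∈ pointwiseStab Sg P ↔ ∀ v ∈ P, (γ : E) v = v := Iff.rfl

lemma stab_char {Sg : Subgroup E} {P : Submodule ℂ (Fin n → ℂ)}
    (hP : P ∈ reflHyperplanes Sg) (γ : ↥Sg) :
    (γ ∈ pointwiseStab Sg P ∧ γ ≠ 1) ↔ (IsReflection (γ : E) ∧ fixedSubspace (γ : E) = P) := by
  obtain ⟨g, -, hg, rfl⟩ := hP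
  have hrk : Module.finrank ℂ (fixedSubspace g) = n - 1 := hg.2
  have hne : fixedSubspace g ≠ ⊤ := fun h => hg.1 (fixedSubspace_eq_top_iff.mp h)
  have hlt : Module.finrank ℂ (fixedSubspace g) < n := by
    have := Submodule.finrank_lt (K := ℂ) (V := Fin n → ℂ) hne
    rwa [finrank_V] at this
  have hcoe_ne : ∀ δ : ↥Sg, δ ≠ 1 ↔ (δ : E) ≠ 1 := by
    intro δ
    constructor
    · intro h h'
      exact h (Subtype.ext h')
    · intro h h'
      exact h (by rw [h']; rfl)
  constructor
  · rintro ⟨hmem, hone⟩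
    have hle : fixedSubspace g ≤ fixedSubspace (γ : E) := fun v hv => hmem v hv
    have hγne : (γ : E) ≠ 1 := (hcoe_ne γ).mp hone
    have hγtop : fixedSubspace (γ : E) ≠ ⊤ := fun h => hγne (fixedSubspace_eq_top_iff.mp h)
    have hγlt : Module.finrank ℂ (fixedSubspace (γ : E)) < n := by
      have := Submodule.finrank_lt (K := ℂ) (V := Fin n → ℂ) hγtop
      rwa [finrank_V] at this
    have hγle : Module.finrank ℂ (fixedSubspace (γ : E)) ≤ n - 1 :=
      Nat.le_sub_one_of_lt hγlt
    have heq : fixedSubspace g = fixedSubspace (γ : E) :=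
      Submodule.eq_of_le_of_finrank_le hle (hγle.trans_eq hrk.symm)
    exact ⟨⟨hγne, heq ▸ hrk⟩, heq.symm⟩
  · rintro ⟨hrefl, hfs⟩
    refine ⟨fun v hv => ?_, fun h => ?_⟩
    · rw [← hfs] at hv
      exact hv
    · exact hrefl.1 (by rw [h]; rfl)

end AuxStmt8

/-- The number of reflections of `Σ` contained in `G` equals
`Σ_{P∈𝒫} (|C_P|·o(P)/ℓ − 1)`, where `𝒫` is the set of all reflecting hyperplanes of `Σ` and
`o(P)` is the number of orbits of `C_P` on `𝒮 = Σ/G`. -/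
theorem stmt8 {n : ℕ} (Sg G : Subgroup ((Fin n → ℂ) ≃ₗ[ℂ] (Fin n → ℂ)))
    (hfin : Finite ↥Sg) (hG : G ≤ Sg) (ℓ : ℕ) (hℓ : ℓ = (G.subgroupOf Sg).index) :
    (Nat.card {g : (Fin n → ℂ) ≃ₗ[ℂ] (Fin n → ℂ) // g ∈ G ∧ IsReflection g} : ℚ) =
      ∑ᶠ P ∈ reflHyperplanes Sg,
        ((Nat.card ↥(pointwiseStab Sg P) : ℚ) * (numOrbits Sg G P : ℚ) / ℓ - 1) := by
  classical
  letI : Fintype ↥Sg := Fintype.ofFinite _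
  set G' := G.subgroupOf Sg with hG'def
  letI : Fintype (↥Sg ⧸ G') := Fintype.ofFinite _
  have hcardQ : Fintype.card (↥Sg ⧸ G') = ℓ := by
    rw [hℓ, Subgroup.index_eq_card, Nat.card_eq_fintype_card]
  have hℓ0 : (ℓ : ℚ) ≠ 0 := by
    have h1 : G'.index ≠ 0 := Subgroup.index_ne_zero_of_finite
    rw [hℓ]
    exact_mod_cast h1
  set N := Nat.card {γ : ↥Sg // γ ∈ G' ∧ IsReflection (γ : (Fin n → ℂ) ≃ₗ[ℂ] (Fin n → ℂ))}
    with hN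
  have hLHS : Nat.card {g : (Fin n → ℂ) ≃ₗ[ℂ] (Fin n → ℂ) // g ∈ G ∧ IsReflection g} = N := by
    refine Nat.card_congr ⟨fun x => ⟨⟨x.1, hG x.2.1⟩, Subgroup.mem_subgroupOf.mpr x.2.1, x.2.2⟩,
      fun y => ⟨(y.1 : (Fin n → ℂ) ≃ₗ[ℂ] (Fin n → ℂ)), Subgroup.mem_subgroupOf.mp y.2.1, y.2.2⟩,
      fun x => rfl, fun y => rfl⟩
  set R : Finset ↥Sg :=
    Finset.univ.filter (fun γ => IsReflection (γ : (Fin n → ℂ) ≃ₗ[ℂ] (Fin n → ℂ))) with hR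
  set f : ↥Sg → ℕ :=
    fun γ => (Finset.univ.filter fun x : ↥Sg ⧸ G' => γ • x = x).card with hf
  have hNcard : N = (Finset.univ.filter
      (fun γ : ↥Sg => γ ∈ G' ∧ IsReflection (γ : (Fin n → ℂ) ≃ₗ[ℂ] (Fin n → ℂ)))).card := by
    rw [hN, Nat.card_eq_fintype_card, Fintype.card_subtype]
  -- the number of reflections fixing a given coset is N
  have hfix : ∀ x : ↥Sg ⧸ G', (R.filter fun γ => γ • x = x).card = N := by
    intro x
    obtain ⟨σ, rfl⟩ : ∃ σ : ↥Sg, (σ : ↥Sg ⧸ G') = x := ⟨x.out, QuotientGroup.out_eq' x⟩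
    rw [hNcard]
    have hmem : ∀ γ : ↥Sg,
        (γ • (σ : ↥Sg ⧸ G') = (σ : ↥Sg ⧸ G')) ↔ σ⁻¹ * γ * σ ∈ G' := by
      intro γ
      rw [show γ • ((σ : ↥Sg ⧸ G')) = ((γ * σ : ↥Sg) : ↥Sg ⧸ G') from
        MulAction.Quotient.smul_mk G' γ σ, QuotientGroup.eq]
      constructor
      · intro h
        have := inv_mem h
        simpa [mul_assoc] using this
      · intro h
        have := inv_mem h
        simpa [mul_assoc] using this
    have hconj : ∀ γ : ↥Sg,
        IsReflection ((σ⁻¹ * γ * σ : ↥Sg) : (Fin n → ℂ) ≃ₗ[ℂ] (Fin n → ℂ)) ↔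
        IsReflection (γ : (Fin n → ℂ) ≃ₗ[ℂ] (Fin n → ℂ)) := by
      intro γ
      have hcoe : ((σ⁻¹ * γ * σ : ↥Sg) : (Fin n → ℂ) ≃ₗ[ℂ] (Fin n → ℂ))
          = (↑σ)⁻¹ * ↑γ * ((↑σ)⁻¹)⁻¹ := by
        push_cast
        rw [inv_inv]
      rw [hcoe, isReflection_conj_iff]
    refine Finset.card_bij' (fun γ _ => σ⁻¹ * γ * σ) (fun δ _ => σ * δ * σ⁻¹) ?_ ?_ ?_ ?_
    · intro γ hγ
      rw [Finset.mem_filter] at hγ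
      obtain ⟨hγR, hγfix⟩ := hγ
      rw [hR, Finset.mem_filter] at hγR
      rw [Finset.mem_filter]
      exact ⟨Finset.mem_univ _, (hmem γ).mp hγfix, (hconj γ).mpr hγR.2⟩
    · intro δ hδ
      rw [Finset.mem_filter] at hδ
      obtain ⟨-, hδG, hδrefl⟩ := hδ
      rw [Finset.mem_filter, hR, Finset.mem_filter]
      constructor
      · refine ⟨Finset.mem_univ _, ?_⟩
        have := (hconj (σ * δ * σ⁻¹)).symm
        rw [show σ⁻¹ * (σ * δ * σ⁻¹) * σ = δ by group] at this
        exact this.mpr hδrefl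
      · rw [hmem]
        rw [show σ⁻¹ * (σ * δ * σ⁻¹) * σ = δ by group]
        exact hδG
    · intro γ _; group
    · intro δ _; group
  have hf1 : f (1 : ↥Sg) = ℓ := by
    have h1 : (Finset.univ.filter fun x : ↥Sg ⧸ G' => (1 : ↥Sg) • x = x) = Finset.univ := by
      apply Finset.filter_true_of_mem
      intro x _
      rw [one_smul]
    rw [hf]
    simp only [h1, Finset.card_univ, hcardQ]
  -- Burnside per hyperplane
  have hBurn : ∀ P ∈ reflHyperplanes Sg,
      Nat.card ↥(pointwiseStab Sg P) * numOrbits Sg G P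
        = ℓ + ∑ γ ∈ R.filter
            (fun γ : ↥Sg => fixedSubspace (γ : (Fin n → ℂ) ≃ₗ[ℂ] (Fin n → ℂ)) = P), f γ := by
    intro P hP
    letI : Fintype ↥(pointwiseStab Sg P) := Fintype.ofFinite _
    letI : Fintype (Quotient (MulAction.orbitRel ↥(pointwiseStab Sg P) (↥Sg ⧸ G'))) :=
      Fintype.ofFinite _
    letI : ∀ c : ↥(pointwiseStab Sg P), Fintype (MulAction.fixedBy (↥Sg ⧸ G') c) :=
      fun _ => Fintype.ofFinite _
    have hB := MulAction.sum_card_fixedBy_eq_card_orbits_mul_card_group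
      ↥(pointwiseStab Sg P) (↥Sg ⧸ G')
    have hfb : ∀ c : ↥(pointwiseStab Sg P),
        Fintype.card (MulAction.fixedBy (↥Sg ⧸ G') c) = f (c : ↥Sg) := by
      intro c
      rw [hf]
      rw [Fintype.card_congr (Equiv.subtypeEquivRight
        (fun x => show x ∈ MulAction.fixedBy (↥Sg ⧸ G') c ↔ (↑c : ↥Sg) • x = x from Iff.rfl))]
      rw [Fintype.card_subtype]
    have hsum : ∑ c : ↥(pointwiseStab Sg P), f (c : ↥Sg)
        = ∑ γ ∈ Finset.univ.filter (· ∈ pointwiseStab Sg P), f γ := by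
      refine Finset.sum_bij (fun (c : ↥(pointwiseStab Sg P)) _ => (c : ↥Sg)) ?_ ?_ ?_ ?_
      · intro c _
        simp only [Finset.mem_filter, Finset.mem_univ, true_and]
        exact c.2
      · intro c _ d _ h
        exact Subtype.ext h
      · intro γ hγ
        rw [Finset.mem_filter] at hγ
        exact ⟨⟨γ, hγ.2⟩, Finset.mem_univ _, rfl⟩
      · intro c _
        rfl
    have h1mem : (1 : ↥Sg) ∈ Finset.univ.filter (· ∈ pointwiseStab Sg P) := by
      simp [Subgroup.one_mem]
    have hsplit : ∑ γ ∈ Finset.univ.filter (· ∈ pointwiseStab Sg P), f γ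
        = f 1 + ∑ γ ∈ (Finset.univ.filter (· ∈ pointwiseStab Sg P)).erase 1, f γ :=
      (Finset.add_sum_erase _ f h1mem).symm
    have hset : (Finset.univ.filter (· ∈ pointwiseStab Sg P)).erase 1
        = R.filter (fun γ : ↥Sg => fixedSubspace (γ : (Fin n → ℂ) ≃ₗ[ℂ] (Fin n → ℂ)) = P) := by
      ext γ
      rw [Finset.mem_erase, Finset.mem_filter, Finset.mem_filter, hR, Finset.mem_filter]
      simp only [Finset.mem_univ, true_and]
      constructor
      · rintro ⟨h1, h2⟩
        exact (stab_char hP γ).mp ⟨h2, h1⟩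
      · intro h
        obtain ⟨h2, h1⟩ := (stab_char hP γ).mpr h
        exact ⟨h1, h2⟩
    calc Nat.card ↥(pointwiseStab Sg P) * numOrbits Sg G P
        = Fintype.card (Quotient (MulAction.orbitRel ↥(pointwiseStab Sg P) (↥Sg ⧸ G')))
          * Fintype.card ↥(pointwiseStab Sg P) := by
          rw [numOrbits, Nat.card_eq_fintype_card, Nat.card_eq_fintype_card, mul_comm]
      _ = ∑ c : ↥(pointwiseStab Sg P),
            Fintype.card (MulAction.fixedBy (↥Sg ⧸ G') c) := hB.symm
      _ = ∑ c : ↥(pointwiseStab Sg P), f (c : ↥Sg) := Finset.sum_congr rfl fun c _ => hfb c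
      _ = f 1 + ∑ γ ∈ (Finset.univ.filter (· ∈ pointwiseStab Sg P)).erase 1, f γ := by
          rw [hsum, hsplit]
      _ = ℓ + ∑ γ ∈ R.filter
            (fun γ : ↥Sg => fixedSubspace (γ : (Fin n → ℂ) ≃ₗ[ℂ] (Fin n → ℂ)) = P), f γ := by
          rw [hf1, hset]
  -- double counting
  have hdc : ∑ γ ∈ R, f γ = ℓ * N := by
    calc ∑ γ ∈ R, f γ
        = ∑ γ ∈ R, ∑ x : ↥Sg ⧸ G', if γ • x = x then 1 else 0 :=
          Finset.sum_congr rfl fun γ _ => Finset.card_filter _ _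
      _ = ∑ x : ↥Sg ⧸ G', ∑ γ ∈ R, if γ • x = x then 1 else 0 := Finset.sum_comm
      _ = ∑ _x : ↥Sg ⧸ G', N :=
          Finset.sum_congr rfl fun x _ => (Finset.card_filter _ _).symm.trans (hfix x)
      _ = ℓ * N := by rw [Finset.sum_const, Finset.card_univ, hcardQ, smul_eq_mul]
  -- finiteness of the set of hyperplanes
  have hPfin : (reflHyperplanes Sg).Finite := by
    apply Set.Finite.subset (Set.finite_range
      (fun γ : ↥Sg => fixedSubspace (γ : (Fin n → ℂ) ≃ₗ[ℂ] (Fin n → ℂ))))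
    rintro P ⟨g, hgSg, _, rfl⟩
    exact ⟨⟨g, hgSg⟩, rfl⟩
  rw [hLHS, ← Set.Finite.coe_toFinset hPfin, finsum_mem_coe_finset]
  have hmaps : ∀ γ ∈ R,
      fixedSubspace (γ : (Fin n → ℂ) ≃ₗ[ℂ] (Fin n → ℂ)) ∈ hPfin.toFinset := by
    intro γ hγ
    rw [hR, Finset.mem_filter] at hγ
    rw [Set.Finite.mem_toFinset]
    exact ⟨↑γ, γ.2, hγ.2, rfl⟩
  calc (N : ℚ)
      = (↑ℓ * ↑N) / ↑ℓ := by rw [mul_div_cancel_left₀ _ hℓ0]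
    _ = (∑ γ ∈ R, (f γ : ℚ)) / ℓ := by
        rw [← Nat.cast_sum, hdc]
        push_cast
        ring
    _ = (∑ P ∈ hPfin.toFinset, ∑ γ ∈ R.filter
          (fun γ : ↥Sg => fixedSubspace (γ : (Fin n → ℂ) ≃ₗ[ℂ] (Fin n → ℂ)) = P), (f γ : ℚ)) / ℓ := by
        rw [Finset.sum_fiberwise_of_maps_to hmaps]
    _ = ∑ P ∈ hPfin.toFinset, (∑ γ ∈ R.filter
          (fun γ : ↥Sg => fixedSubspace (γ : (Fin n → ℂ) ≃ₗ[ℂ] (Fin n → ℂ)) = P), (f γ : ℚ)) / ℓ := by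
        rw [Finset.sum_div]
    _ = ∑ P ∈ hPfin.toFinset,
          ((Nat.card ↥(pointwiseStab Sg P) : ℚ) * (numOrbits Sg G P : ℚ) / ℓ - 1) := by
        refine Finset.sum_congr rfl fun P hP => ?_
        rw [Set.Finite.mem_toFinset] at hP
        have hq : ((Nat.card ↥(pointwiseStab Sg P) * numOrbits Sg G P : ℕ) : ℚ)
            = ((ℓ + ∑ γ ∈ R.filter
                (fun γ : ↥Sg => fixedSubspace (γ : (Fin n → ℂ) ≃ₗ[ℂ] (Fin n → ℂ)) = P), f γ : ℕ) : ℚ) := by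
          rw [hBurn P hP]
        push_cast at hq
        rw [hq, add_div, div_self hℓ0]
        ring
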